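/- arXiv:1905.03992 — 3 statements merged into one kernel-verified Lean document; each statement's English description precedes it below -/
import Mathlib

section
/- Let (mₙ) be an increasing sequence of positive reals with liminf_{n→∞} mₙ/n > 0, and let A ⊆ ℕ. If the lower (mₙ)-density of A is zero, i.e. liminf_{n→∞} |A ∩ [1,mₙ]|/n = 0, then the lower l;(mₙ)-Banach density of A is zero, i.e. liminf_{s→∞} liminf_{n→∞} |A ∩ [n+1, n+mₛ]|/s = 0. -/
open Filter

private lemma window_finite (A : Set ℕ) (n : ℕ) (X : ℝ) :
    ({k | k ∈ A ∧ n + 1 ≤ k ∧ (k : ℝ) ≤ X}).Finite :=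
  (Set.finite_Iic ⌊X⌋₊).subset fun _ hk => Nat.le_floor hk.2.2

private lemma window_card_le (A : Set ℕ) (n : ℕ) (X : ℝ) (B : ℕ) (hB : X ≤ n + B) :
    ({k | k ∈ A ∧ n + 1 ≤ k ∧ (k : ℝ) ≤ X}).ncard ≤ B := by
  have hsub : {k | k ∈ A ∧ n + 1 ≤ k ∧ (k : ℝ) ≤ X} ⊆ Set.Icc (n+1) (n+B) := by
    rintro k ⟨-, h1, h2⟩
    refine ⟨h1, ?_⟩
    have : (k : ℝ) ≤ ((n + B : ℕ) : ℝ) := by push_cast; linarith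
    exact_mod_cast this
  calc ({k | k ∈ A ∧ n + 1 ≤ k ∧ (k : ℝ) ≤ X}).ncard
      ≤ (Set.Icc (n+1) (n+B)).ncard := Set.ncard_le_ncard hsub (Set.finite_Icc _ _)
    _ = B := by rw [← Finset.coe_Icc, Set.ncard_coe_finset, Nat.card_Icc]; omega

private lemma window_card_lb (A : Set ℕ) (μ : ℝ) (N B₀ : ℕ)
    (hμB : μ ≤ B₀)
    (hsyn : ∀ n, N ≤ n → ∃ k, k ∈ A ∧ n + 1 ≤ k ∧ (k : ℝ) ≤ n + μ)
    (n : ℕ) (hn : N ≤ n) (t : ℕ) (X : ℝ) (hX : (n : ℝ) + t * B₀ ≤ X) :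
    (t : ℝ) ≤ (({k | k ∈ A ∧ n + 1 ≤ k ∧ (k : ℝ) ≤ X}).ncard : ℝ) := by
  have hsyn' : ∀ p : ℕ, ∃ k, N ≤ p → k ∈ A ∧ p + 1 ≤ k ∧ (k : ℝ) ≤ p + μ := by
    intro p
    by_cases h : N ≤ p
    · obtain ⟨k, hk⟩ := hsyn p h; exact ⟨k, fun _ => hk⟩
    · exact ⟨0, fun h' => absurd h' h⟩
  choose K hK using hsyn'
  set φ : ℕ → ℕ := fun i => K (n + i * B₀) with hφdef
  have hNi : ∀ i : ℕ, N ≤ n + i * B₀ := fun i => le_trans hn (Nat.le_add_right _ _)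
  have hφA : ∀ i, φ i ∈ A := fun i => (hK _ (hNi i)).1
  have hφlb : ∀ i, n + i * B₀ + 1 ≤ φ i := fun i => (hK _ (hNi i)).2.1
  have hφub : ∀ i, φ i ≤ n + (i + 1) * B₀ := by
    intro i
    have h2 := (hK _ (hNi i)).2.2
    have : (φ i : ℝ) ≤ ((n + (i + 1) * B₀ : ℕ) : ℝ) := by push_cast at h2 ⊢; nlinarith
    exact_mod_cast this
  have hmono : StrictMono φ := strictMono_nat_of_lt_succ (fun i =>
    Nat.lt_of_le_of_lt (hφub i) (Nat.lt_of_succ_le (hφlb (i + 1))))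
  have hsub : ↑((Finset.range t).image φ) ⊆ {k | k ∈ A ∧ n + 1 ≤ k ∧ (k : ℝ) ≤ X} := by
    intro k hk
    simp only [Finset.coe_image, Set.mem_image, Finset.mem_coe, Finset.mem_range] at hk
    obtain ⟨i, hi, rfl⟩ := hk
    refine ⟨hφA i, le_trans (by omega) (hφlb i), ?_⟩
    have h1 : ((φ i : ℕ) : ℝ) ≤ (n : ℝ) + ((i : ℝ) + 1) * B₀ := by
      have h := hφub i
      have h' : ((φ i : ℕ) : ℝ) ≤ ((n + (i + 1) * B₀ : ℕ) : ℝ) := by exact_mod_cast h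
      push_cast at h'; linarith
    have h2 : ((i : ℝ) + 1) * B₀ ≤ (t : ℝ) * B₀ := by
      have hit : (i : ℝ) + 1 ≤ t := by exact_mod_cast hi
      have hB : (0:ℝ) ≤ B₀ := Nat.cast_nonneg _
      nlinarith
    linarith
  have hcard : ((Finset.range t).image φ).card = t := by
    rw [Finset.card_image_of_injective _ hmono.injective, Finset.card_range]
  have h := Set.ncard_le_ncard hsub (window_finite A n X)
  rw [Set.ncard_coe_finset, hcard] at h
  exact_mod_cast h

private def innerSet (m : ℕ → ℝ) (A : Set ℕ) (s : ℕ) : Set ℝ :=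
  {b : ℝ | ∀ᶠ n : ℕ in Filter.atTop,
    b ≤ (({k | k ∈ A ∧ n + 1 ≤ k ∧ (k : ℝ) ≤ (n : ℝ) + m s}).ncard : ℝ) / s}

set_option maxHeartbeats 1000000 in
/-- If the lower `(mₙ)`-density of `A ⊆ ℕ` is zero, then the lower `l;(mₙ)`-Banach density
of `A` is zero, provided `(mₙ)` is increasing with `liminf mₙ/n > 0`. -/
theorem lower_density_zero_imp_lower_banach_density_zero
    (m : ℕ → ℝ) (hm : StrictMono m) (hm1 : ∀ n, 1 ≤ m n)
    (hliminf : 0 < Filter.atTop.liminf (fun n : ℕ => m n / n))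
    (A : Set ℕ)
    (hA : Filter.atTop.liminf
      (fun n : ℕ => (({k | k ∈ A ∧ 1 ≤ k ∧ (k : ℝ) ≤ m n}).ncard : ℝ) / n) = 0) :
    Filter.atTop.liminf (fun s : ℕ =>
      Filter.atTop.liminf (fun n : ℕ =>
        (({k | k ∈ A ∧ n + 1 ≤ k ∧ (k : ℝ) ≤ (n : ℝ) + m s}).ncard : ℝ) / s)) = 0 := by
  have hm0 : ∀ s, (0:ℝ) ≤ m s := fun s => le_trans zero_le_one (hm1 s)
  have hceil_pos : ∀ s : ℕ, 0 < ⌈m s⌉₊ := fun s =>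
    Nat.ceil_pos.2 (lt_of_lt_of_le one_pos (hm1 s))
  -- basic facts about the inner sets
  have hzero_mem : ∀ s : ℕ, (0:ℝ) ∈ innerSet m A s := fun s =>
    Filter.Eventually.of_forall fun n => by positivity
  have hbddInner : ∀ s : ℕ, BddAbove (innerSet m A s) := by
    intro s
    refine ⟨(⌈m s⌉₊ : ℝ), fun b hb => ?_⟩
    obtain ⟨n, hn⟩ := hb.exists
    refine hn.trans ?_
    have hc : (({k | k ∈ A ∧ n + 1 ≤ k ∧ (k : ℝ) ≤ (n : ℝ) + m s}).ncard : ℝ) ≤ (⌈m s⌉₊ : ℝ) := by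
      exact_mod_cast window_card_le A n ((n : ℝ) + m s) ⌈m s⌉₊
        (by have := Nat.le_ceil (m s); linarith)
    rcases Nat.eq_zero_or_pos s with hs | hs
    · subst hs; simp only [Nat.cast_zero, div_zero]; positivity
    · have h1 : (1:ℝ) ≤ (s:ℝ) := by exact_mod_cast hs
      exact le_trans (div_le_self (by positivity) h1) hc
  have hFnonneg : ∀ s : ℕ, 0 ≤ sSup (innerSet m A s) :=
    fun s => le_csSup (hbddInner s) (hzero_mem s)
  simp only [Filter.liminf_eq] at hliminf hA ⊢
  show sSup {a : ℝ | ∀ᶠ s : ℕ in atTop, a ≤ sSup (innerSet m A s)} = 0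
  by_cases hbOut : BddAbove {a : ℝ | ∀ᶠ s : ℕ in atTop, a ≤ sSup (innerSet m A s)}
  swap
  · exact Real.sSup_of_not_bddAbove hbOut
  have h0out : (0:ℝ) ∈ {a : ℝ | ∀ᶠ s : ℕ in atTop, a ≤ sSup (innerSet m A s)} :=
    Filter.Eventually.of_forall hFnonneg
  refine le_antisymm ?_ (le_csSup hbOut h0out)
  by_contra hlt
  push_neg at hlt
  obtain ⟨a, ha_mem, ha_pos⟩ := exists_lt_of_lt_csSup ⟨0, h0out⟩ hlt
  -- pick s₀ ≥ 1 with positive inner liminf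
  obtain ⟨s₀, hs₀1, hs₀⟩ :=
    ((eventually_ge_atTop 1).and (ha_mem : ∀ᶠ s : ℕ in atTop, a ≤ sSup (innerSet m A s))).exists
  obtain ⟨b, hb_mem, hb_pos⟩ := exists_lt_of_lt_csSup ⟨0, hzero_mem s₀⟩ (ha_pos.trans_le hs₀)
  obtain ⟨N, hN⟩ := Filter.eventually_atTop.1 hb_mem
  -- syndeticity
  have hsyn : ∀ n, N ≤ n → ∃ k, k ∈ A ∧ n + 1 ≤ k ∧ (k : ℝ) ≤ (n : ℝ) + m s₀ := by
    intro n hn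
    have h := hN n hn
    have hne : ({k | k ∈ A ∧ n + 1 ≤ k ∧ (k : ℝ) ≤ (n : ℝ) + m s₀}).ncard ≠ 0 := by
      intro h0
      rw [h0] at h
      simp only [Nat.cast_zero, zero_div] at h
      linarith
    obtain ⟨k, hk⟩ := Set.nonempty_of_ncard_ne_zero hne
    exact ⟨k, hk⟩
  set B₀ : ℕ := ⌈m s₀⌉₊ with hB₀def
  have hB₀pos : 0 < B₀ := hceil_pos s₀
  have hB₀R : (0:ℝ) < (B₀:ℝ) := by exact_mod_cast hB₀pos
  have hmB₀ : m s₀ ≤ (B₀:ℝ) := Nat.le_ceil _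
  -- the big (density) sets are finite
  have hDfin : ∀ M : ℕ, ({k | k ∈ A ∧ 1 ≤ k ∧ (k : ℝ) ≤ m M}).Finite := fun M =>
    (Set.finite_Iic ⌊m M⌋₊).subset fun _ hk => Nat.le_floor hk.2.2
  by_cases hbA : BddAbove {a : ℝ | ∀ᶠ M : ℕ in atTop,
      a ≤ (({k | k ∈ A ∧ 1 ≤ k ∧ (k : ℝ) ≤ m M}).ncard : ℝ) / M}
  · -- density liminf is genuine: derive eventual positive lower bound, contradiction with hA
    have hbm : BddAbove {a : ℝ | ∀ᶠ n : ℕ in atTop, a ≤ m n / n} := by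
      by_contra h
      rw [Real.sSup_of_not_bddAbove h] at hliminf
      exact lt_irrefl _ hliminf
    have h0m : (0:ℝ) ∈ {a : ℝ | ∀ᶠ n : ℕ in atTop, a ≤ m n / n} :=
      Filter.Eventually.of_forall fun n => div_nonneg (hm0 n) (Nat.cast_nonneg n)
    obtain ⟨α, hα_mem, hα_pos⟩ := exists_lt_of_lt_csSup ⟨0, h0m⟩ hliminf
    have hev : ∀ᶠ M : ℕ in atTop,
        α / (2 * B₀) ≤ (({k | k ∈ A ∧ 1 ≤ k ∧ (k : ℝ) ≤ m M}).ncard : ℝ) / M := by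
      filter_upwards [hα_mem, eventually_ge_atTop 1,
        (tendsto_natCast_atTop_atTop (R := ℝ)).eventually_ge_atTop
          (2 * ((N:ℝ) + B₀ + B₀) / α)] with M hMα hM1 hMbig
      have hMpos : (0:ℝ) < M := by exact_mod_cast hM1
      have hmM : α * M ≤ m M := by
        have := (le_div_iff₀ hMpos).1 hMα; linarith
      have h5 : 2 * ((N:ℝ) + B₀ + B₀) ≤ α * M := by
        have := (div_le_iff₀ hα_pos).1 hMbig; nlinarith
      have hNle : (N:ℝ) ≤ m M := by nlinarith
      set t : ℕ := ⌊(m M - N) / B₀⌋₊ with ht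
      have htle : (t:ℝ) * B₀ ≤ m M - N := by
        have h1 : (t:ℝ) ≤ (m M - N) / B₀ := Nat.floor_le (div_nonneg (by linarith) hB₀R.le)
        calc (t:ℝ) * B₀ ≤ ((m M - N) / B₀) * B₀ := by nlinarith
          _ = m M - N := by field_simp
      have h6 : m M - N < ((t:ℝ) + 1) * B₀ := by
        have h1 : (m M - N) / B₀ < (t:ℝ) + 1 := Nat.lt_floor_add_one _
        calc m M - N = ((m M - N) / B₀) * B₀ := by field_simp
          _ < ((t:ℝ) + 1) * B₀ := by nlinarith
      have hDt : (t:ℝ) ≤ (({k | k ∈ A ∧ N + 1 ≤ k ∧ (k : ℝ) ≤ m M}).ncard : ℝ) :=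
        window_card_lb A (m s₀) N B₀ hmB₀ hsyn N le_rfl t (m M) (by linarith)
      have hinc : (({k | k ∈ A ∧ N + 1 ≤ k ∧ (k : ℝ) ≤ m M}).ncard : ℝ)
          ≤ (({k | k ∈ A ∧ 1 ≤ k ∧ (k : ℝ) ≤ m M}).ncard : ℝ) := by
        have hsub2 : {k | k ∈ A ∧ N + 1 ≤ k ∧ (k : ℝ) ≤ m M}
            ⊆ {k | k ∈ A ∧ 1 ≤ k ∧ (k : ℝ) ≤ m M} := by
          rintro k ⟨hk1, hk2, hk3⟩
          exact ⟨hk1, le_trans (Nat.le_add_left 1 N) hk2, hk3⟩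
        exact Nat.cast_le.mpr (Set.ncard_le_ncard hsub2 (hDfin M))
      rw [div_le_div_iff₀ (by positivity) hMpos]
      nlinarith
    have hle := le_csSup hbA hev
    rw [hA] at hle
    have : (0:ℝ) < α / (2 * B₀) := by positivity
    linarith
  · -- density liminf is +∞ junk: then m s / s → ∞ and the outer set is unbounded, contradiction
    have hmtop : ∀ c : ℝ, ∀ᶠ s : ℕ in atTop, c ≤ m s / s := by
      intro c
      obtain ⟨y, hy_mem, hy⟩ := not_bddAbove_iff.1 hbA (max c 0)
      filter_upwards [hy_mem, eventually_ge_atTop 1] with M hMy hM1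
      have hMpos : (0:ℝ) < M := by exact_mod_cast hM1
      have hDle : (({k | k ∈ A ∧ 1 ≤ k ∧ (k : ℝ) ≤ m M}).ncard : ℝ) ≤ m M := by
        have h1 : ({k | k ∈ A ∧ 1 ≤ k ∧ (k : ℝ) ≤ m M}).ncard ≤ ⌊m M⌋₊ := by
          have hsub : {k | k ∈ A ∧ 1 ≤ k ∧ (k : ℝ) ≤ m M} ⊆ Set.Icc 1 ⌊m M⌋₊ :=
            fun k hk => ⟨hk.2.1, Nat.le_floor hk.2.2⟩
          calc _ ≤ (Set.Icc 1 ⌊m M⌋₊).ncard := Set.ncard_le_ncard hsub (Set.finite_Icc _ _)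
            _ = ⌊m M⌋₊ := by rw [← Finset.coe_Icc, Set.ncard_coe_finset, Nat.card_Icc]; omega
        calc (({k | k ∈ A ∧ 1 ≤ k ∧ (k : ℝ) ≤ m M}).ncard : ℝ)
            ≤ (⌊m M⌋₊ : ℝ) := Nat.cast_le.mpr h1
          _ ≤ m M := Nat.floor_le (hm0 M)
      have h2 : (({k | k ∈ A ∧ 1 ≤ k ∧ (k : ℝ) ≤ m M}).ncard : ℝ) / M ≤ m M / M := by
        gcongr
      have h3 := le_trans (le_of_lt hy) (le_trans hMy h2)
      exact le_trans (le_max_left c 0) h3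
    obtain ⟨ub, hub⟩ := hbOut
    have hub0 : (0:ℝ) ≤ ub := hub h0out
    have hc_mem : ub + 1 ∈ {a : ℝ | ∀ᶠ s : ℕ in atTop, a ≤ sSup (innerSet m A s)} := by
      show ∀ᶠ s : ℕ in atTop, ub + 1 ≤ sSup (innerSet m A s)
      filter_upwards [hmtop ((B₀:ℝ) * (ub + 2)), eventually_ge_atTop 1] with s hms hs1
      have hsR : (0:ℝ) < s := by exact_mod_cast hs1
      have hmslb : (B₀:ℝ) * (ub + 2) * s ≤ m s := by
        have := (le_div_iff₀ hsR).1 hms; linarith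
      have ht_mem : ((⌊m s / B₀⌋₊ : ℝ) / s) ∈ innerSet m A s := by
        have : ∀ᶠ n : ℕ in atTop, (⌊m s / B₀⌋₊ : ℝ) / s
            ≤ (({k | k ∈ A ∧ n + 1 ≤ k ∧ (k : ℝ) ≤ (n : ℝ) + m s}).ncard : ℝ) / s := by
          filter_upwards [eventually_ge_atTop N] with n hn
          have hbound : (n : ℝ) + (⌊m s / B₀⌋₊ : ℝ) * B₀ ≤ (n : ℝ) + m s := by
            have h1 : ((⌊m s / B₀⌋₊ : ℕ) : ℝ) ≤ m s / B₀ := Nat.floor_le (div_nonneg (hm0 s) hB₀R.le)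
            have h2 : ((⌊m s / B₀⌋₊ : ℕ) : ℝ) * B₀ ≤ (m s / B₀) * B₀ :=
              mul_le_mul_of_nonneg_right h1 hB₀R.le
            have h3 : (m s / B₀) * B₀ = m s := by field_simp
            linarith
          have hcount := window_card_lb A (m s₀) N B₀ hmB₀ hsyn n hn ⌊m s / B₀⌋₊
            ((n : ℝ) + m s) hbound
          gcongr
        exact this
      have hfs := le_csSup (hbddInner s) ht_mem
      refine le_trans ?_ hfs
      rw [le_div_iff₀ hsR]
      have htlb : m s / B₀ < (⌊m s / B₀⌋₊ : ℝ) + 1 := Nat.lt_floor_add_one _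
      have h4 : m s < ((⌊m s / B₀⌋₊ : ℝ) + 1) * B₀ := by
        have := mul_lt_mul_of_pos_right htlb hB₀R
        calc m s = (m s / B₀) * B₀ := by field_simp
          _ < ((⌊m s / B₀⌋₊ : ℝ) + 1) * B₀ := this
      have h5 : ((ub + 2) * s) * B₀ < ((⌊m s / B₀⌋₊ : ℝ) + 1) * B₀ := by nlinarith
      have h6 : (ub + 2) * (s:ℝ) < (⌊m s / B₀⌋₊ : ℝ) + 1 := lt_of_mul_lt_mul_right h5 hB₀R.le
      have hs1R : (1:ℝ) ≤ s := by exact_mod_cast hs1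
      nlinarith
    have := hub hc_mem
    linarith
end

section
/- Let X = ℓ¹(ℕ), let ωₙ = 2n/(2n−1), and let T be the unilateral weighted backward shift T⟨xₙ⟩ = ⟨ωₙ xₙ₊₁⟩. Then T is absolutely Cesàro bounded: there exists a constant C > 0 such that (1/n) Σ_{l=1}^{n} ‖Tˡ x‖ ≤ C ‖x‖ for every x ∈ ℓ¹(ℕ) and every n ∈ ℕ. -/
open Filter Finset
open scoped ENNReal

noncomputable def wgt (j : ℕ) : ℝ := (2*(j:ℝ)+2)/(2*(j:ℝ)+1)

noncomputable def Qp (m : ℕ) : ℝ := ∏ j ∈ Finset.range m, wgt j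

lemma wgt_pos (j : ℕ) : 0 < wgt j := by
  unfold wgt; positivity

lemma Qp_pos (m : ℕ) : 0 < Qp m :=
  Finset.prod_pos fun j _ => wgt_pos j

lemma Qp_sq_le (m : ℕ) : (Qp m)^2 ≤ 4*m+1 := by
  induction m with
  | zero => simp [Qp]
  | succ m ih =>
    have h1 : (0:ℝ) < 2*(m:ℝ)+1 := by positivity
    have : Qp (m+1) = Qp m * wgt m := Finset.prod_range_succ _ _
    rw [this, mul_pow]
    unfold wgt
    rw [div_pow, mul_comm, div_mul_eq_mul_div, div_le_iff₀ (by positivity)]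
    push_cast
    nlinarith [ih, sq_nonneg ((m:ℝ)+1)]

lemma Qp_sq_ge (m : ℕ) : 2*m+1 ≤ (Qp m)^2 := by
  induction m with
  | zero => simp [Qp]
  | succ m ih =>
    have h1 : (0:ℝ) < 2*(m:ℝ)+1 := by positivity
    have : Qp (m+1) = Qp m * wgt m := Finset.prod_range_succ _ _
    rw [this, mul_pow]
    unfold wgt
    rw [div_pow, ← mul_div_assoc, le_div_iff₀ (by positivity)]
    push_cast
    nlinarith [ih]

lemma Qp_le_sqrt (m : ℕ) : Qp m ≤ Real.sqrt (4*m+1) := by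
  have := Qp_sq_le m
  nlinarith [Real.sq_sqrt (show (0:ℝ) ≤ 4*m+1 by positivity),
    Real.sqrt_nonneg (4*(m:ℝ)+1), (Qp_pos m)]

lemma sqrt_le_Qp (m : ℕ) : Real.sqrt (2*m+1) ≤ Qp m := by
  have := Qp_sq_ge m
  nlinarith [Real.sq_sqrt (show (0:ℝ) ≤ 2*m+1 by positivity),
    Real.sqrt_nonneg (2*(m:ℝ)+1), (Qp_pos m)]

/-- key pointwise estimate for telescoping -/
lemma inv_sqrt_le (m : ℕ) :
    1 / Real.sqrt (2*m+1) ≤ Real.sqrt (2*(m+1)) - Real.sqrt (2*m) := by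
  have ha : (0:ℝ) ≤ 2*m := by positivity
  have hb : (0:ℝ) ≤ 2*m+1 := by positivity
  have hc : (0:ℝ) ≤ 2*(m+1) := by positivity
  set sa := Real.sqrt (2*m) with hsa
  set sb := Real.sqrt (2*(m:ℝ)+1) with hsb
  set sc := Real.sqrt (2*((m:ℝ)+1)) with hsc
  have ha2 : sa^2 = 2*m := Real.sq_sqrt ha
  have hb2 : sb^2 = 2*m+1 := Real.sq_sqrt hb
  have hc2 : sc^2 = 2*(m+1) := Real.sq_sqrt hc
  have hbpos : 0 < sb := Real.sqrt_pos.2 (by positivity)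
  have hsa0 : 0 ≤ sa := Real.sqrt_nonneg _
  have hsc0 : 0 ≤ sc := Real.sqrt_nonneg _
  rw [div_le_iff₀ hbpos]
  -- 1 ≤ (sc - sa) * sb ; use sb ≥ (sa+sc)/2 and sc ≥ sa
  have hca : sa ≤ sc := Real.sqrt_le_sqrt (by push_cast; linarith)
  have havg : (sa + sc)/2 ≤ sb := by
    nlinarith [sq_nonneg (sa - sc), sq_nonneg (sa + sc)]
  nlinarith [mul_le_mul_of_nonneg_left havg (sub_nonneg.2 hca)]

lemma telescope (a k : ℕ) (h : a ≤ k) :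
    ∑ m ∈ Finset.Ico a k, 1 / Real.sqrt (2*m+1)
      ≤ Real.sqrt (2*k) - Real.sqrt (2*a) := by
  induction k with
  | zero => interval_cases a; simp
  | succ k ih =>
    rcases Nat.lt_or_ge a (k+1) with hlt | hge
    · have hak : a ≤ k := Nat.lt_succ_iff.1 hlt
      rw [Finset.sum_Ico_succ_top hak]
      have := inv_sqrt_le k
      have := ih hak
      push_cast at *
      linarith
    · have : a = k+1 := le_antisymm h hge
      subst this; simp

lemma sqrt_ratio_bound {k : ℕ} (hk : 1 ≤ k) {a : ℕ} (hak : a ≤ k) :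
    Real.sqrt (4*k+1) * (Real.sqrt (2*k) - Real.sqrt (2*a)) ≤ 4*(k-a : ℝ) := by
  set s := Real.sqrt (2*(k:ℝ)) with hs
  set t := Real.sqrt (2*(a:ℝ)) with ht
  set r := Real.sqrt (4*(k:ℝ)+1) with hr
  have hs2 : s^2 = 2*k := Real.sq_sqrt (by positivity)
  have ht2 : t^2 = 2*a := Real.sq_sqrt (by positivity)
  have hr2 : r^2 = 4*k+1 := Real.sq_sqrt (by positivity)
  have hs0 : 0 ≤ s := Real.sqrt_nonneg _
  have ht0 : 0 ≤ t := Real.sqrt_nonneg _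
  have hr0 : 0 ≤ r := Real.sqrt_nonneg _
  have hts : t ≤ s := Real.sqrt_le_sqrt (by
    have : (a:ℝ) ≤ k := by exact_mod_cast hak
    linarith)
  have hk1 : (1:ℝ) ≤ k := by exact_mod_cast hk
  have hr2s : r ≤ 2*s := by
    nlinarith [sq_nonneg (r - 2*s), sq_nonneg (r + 2*s)]
  nlinarith [mul_le_mul_of_nonneg_right hr2s (sub_nonneg.2 hts),
    mul_le_mul_of_nonneg_right hts ht0]

lemma core (n k : ℕ) (hn : 1 ≤ n) :
    ∑ l ∈ Finset.Icc 1 (min n k), Qp k / Qp (k - l) ≤ 4 * (n:ℝ) := by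
  rcases Nat.eq_zero_or_pos k with rfl | hk
  · simp
  set n' := min n k with hn'
  have hn'k : n' ≤ k := min_le_right _ _
  have hn'n : n' ≤ n := min_le_left _ _
  have hn'1 : 1 ≤ n' := le_min hn hk
  have step1 : ∑ l ∈ Finset.Icc 1 n', Qp k / Qp (k - l)
      ≤ ∑ l ∈ Finset.Icc 1 n', Real.sqrt (4*k+1) * (1 / Real.sqrt (2*(k-l : ℕ)+1)) := by
    apply Finset.sum_le_sum
    intro l hl
    have h1 : Real.sqrt (2*(k-l:ℕ)+1) ≤ Qp (k-l) := sqrt_le_Qp _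
    have h2 : (0:ℝ) < Real.sqrt (2*(k-l:ℕ)+1) := Real.sqrt_pos.2 (by positivity)
    have h3 : Qp k ≤ Real.sqrt (4*k+1) := Qp_le_sqrt _
    rw [div_le_iff₀ (Qp_pos _)]
    have h4 : (1:ℝ) ≤ 1 / Real.sqrt (2*(k-l:ℕ)+1) * Qp (k-l) := by
      rw [one_div, inv_mul_eq_div, le_div_iff₀ h2]
      simpa using h1
    calc Qp k ≤ Real.sqrt (4*k+1) := h3
      _ ≤ Real.sqrt (4*k+1) * (1 / Real.sqrt (2*(k-l:ℕ)+1) * Qp (k-l)) :=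
          le_mul_of_one_le_right (Real.sqrt_nonneg _) h4
      _ = Real.sqrt (4*k+1) * (1 / Real.sqrt (2*(k-l:ℕ)+1)) * Qp (k-l) := by ring
  have step2 : ∑ l ∈ Finset.Icc 1 n', (1 / Real.sqrt (2*((k-l : ℕ):ℝ)+1))
      = ∑ m ∈ Finset.Ico (k - n') k, (1 / Real.sqrt (2*(m:ℝ)+1)) := by
    apply Finset.sum_nbij' (fun l => k - l) (fun m => k - m)
    · intro l hl; simp only [Finset.mem_Icc, Finset.mem_Ico] at *; omega
    · intro m hm; simp only [Finset.mem_Icc, Finset.mem_Ico] at *; omega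
    · intro l hl; simp only [Finset.mem_Icc] at hl; omega
    · intro m hm; simp only [Finset.mem_Ico] at hm; omega
    · intro l hl; rfl
  have step3 : ∑ m ∈ Finset.Ico (k - n') k, (1 / Real.sqrt (2*(m:ℝ)+1))
      ≤ Real.sqrt (2*k) - Real.sqrt (2*(k - n' : ℕ)) := telescope _ _ (Nat.sub_le _ _)
  have hcast : ((k - n' : ℕ):ℝ) = (k:ℝ) - n' := by
    rw [Nat.cast_sub hn'k]
  have step4 : Real.sqrt (4*k+1) * (Real.sqrt (2*k) - Real.sqrt (2*((k - n':ℕ):ℝ)))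
      ≤ 4*((k:ℝ) - ((k - n':ℕ):ℝ)) := by
    rw [hcast]
    have := sqrt_ratio_bound hk (Nat.sub_le k n')
    rw [hcast] at this
    convert this using 3 <;> ring
  calc ∑ l ∈ Finset.Icc 1 n', Qp k / Qp (k - l)
      ≤ ∑ l ∈ Finset.Icc 1 n', Real.sqrt (4*k+1) * (1 / Real.sqrt (2*(k-l : ℕ)+1)) := step1
    _ = Real.sqrt (4*k+1) * ∑ l ∈ Finset.Icc 1 n', (1 / Real.sqrt (2*((k-l : ℕ):ℝ)+1)) := by
        rw [Finset.mul_sum]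
    _ = Real.sqrt (4*k+1) * ∑ m ∈ Finset.Ico (k - n') k, (1 / Real.sqrt (2*(m:ℝ)+1)) := by
        rw [step2]
    _ ≤ Real.sqrt (4*k+1) * (Real.sqrt (2*k) - Real.sqrt (2*((k - n':ℕ):ℝ))) := by
        apply mul_le_mul_of_nonneg_left _ (Real.sqrt_nonneg _)
        exact step3
    _ ≤ 4*((k:ℝ) - ((k - n':ℕ):ℝ)) := step4
    _ = 4*(n':ℝ) := by rw [hcast]; ring
    _ ≤ 4*(n:ℝ) := by
        have : (n':ℝ) ≤ n := by exact_mod_cast hn'n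
        linarith

lemma lp_hasSum_norm (f : lp (fun _ : ℕ => ℝ) 1) :
    HasSum (fun k => ‖f k‖) ‖f‖ := by
  have h := lp.hasSum_norm (p := 1) (by norm_num) f
  simpa using h

/-- The weighted backward shift with weights `ωₙ = 2n/(2n−1)` on `ℓ¹(ℕ)` is
absolutely Cesàro bounded. -/
theorem backward_shift_absolutely_cesaro_bounded [Fact ((1 : ℝ≥0∞) ≤ 1)]
    (T : lp (fun _ : ℕ => ℝ) 1 →L[ℝ] lp (fun _ : ℕ => ℝ) 1)
    (hT : ∀ (x : lp (fun _ : ℕ => ℝ) 1) (n : ℕ),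
      (T x) n = ((2 * ((n : ℝ) + 1)) / (2 * ((n : ℝ) + 1) - 1)) * x (n + 1)) :
    ∃ C : ℝ, 0 < C ∧ ∀ (x : lp (fun _ : ℕ => ℝ) 1) (n : ℕ), 1 ≤ n →
      (1 / (n : ℝ)) * ∑ l ∈ Finset.Icc 1 n, ‖(T ^ l) x‖ ≤ C * ‖x‖ := by
  -- coordinates of T^l
  have hTpow : ∀ (l : ℕ) (x : lp (fun _ : ℕ => ℝ) 1) (k : ℕ),
      ((T ^ l) x) k = (∏ j ∈ Finset.Ico k (k+l), wgt j) * x (k+l) := by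
    intro l
    induction l with
    | zero => intro x k; simp
    | succ l ih =>
      intro x k
      have h1 : (T ^ (l+1)) x = (T ^ l) (T x) := by
        rw [pow_succ]; rfl
      rw [h1, ih (T x) k, hT x (k+l)]
      have h2 : ((2 * (((k+l:ℕ) : ℝ) + 1)) / (2 * (((k+l:ℕ)  : ℝ) + 1) - 1)) = wgt (k+l) := by
        unfold wgt; push_cast; ring_nf
      rw [h2, show k+(l+1) = (k+l)+1 from rfl,
        Finset.prod_Ico_succ_top (Nat.le_add_right k l)]
      ring
  refine ⟨4, by norm_num, ?_⟩
  intro x n hn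
  have hnpos : (0:ℝ) < n := by exact_mod_cast hn
  rw [one_div, inv_mul_le_iff₀ hnpos]
  -- the coefficient function
  set F : ℕ → ℕ → ℝ := fun l k =>
    if l ≤ k then (∏ j ∈ Finset.Ico (k-l) k, wgt j) * ‖x k‖ else 0 with hF
  have hFsum : ∀ l, HasSum (F l) ‖(T ^ l) x‖ := by
    intro l
    have h0 : HasSum (fun m => ‖((T ^ l) x) m‖) ‖(T ^ l) x‖ := lp_hasSum_norm _
    have h1 : (fun m => ‖((T ^ l) x) m‖) = fun m => F l (m + l) := by
      funext m
      rw [hTpow l x m, hF]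
      simp only [Nat.le_add_left, if_pos, Nat.add_sub_cancel]
      rw [norm_mul, Real.norm_of_nonneg (Finset.prod_nonneg fun j _ => (wgt_pos j).le)]
    rw [h1] at h0
    have hinj : Function.Injective (fun m : ℕ => m + l) := add_left_injective l
    have hsupp : ∀ k ∉ Set.range (fun m : ℕ => m + l), F l k = 0 := by
      intro k hk
      rw [hF]
      have : ¬ l ≤ k := by
        intro hlk
        exact hk ⟨k - l, by show k - l + l = k; omega⟩
      simp [this]
    exact (Function.Injective.hasSum_iff hinj hsupp).1 h0
  have hsum_eq : ∑ l ∈ Finset.Icc 1 n, ‖(T ^ l) x‖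
      = ∑' k, ∑ l ∈ Finset.Icc 1 n, F l k := by
    rw [Summable.tsum_finsetSum (fun l _ => (hFsum l).summable)]
    exact Finset.sum_congr rfl fun l _ => ((hFsum l).tsum_eq).symm
  have hxsum : HasSum (fun k => ‖x k‖) ‖x‖ := lp_hasSum_norm x
  have hbound : ∀ k, ∑ l ∈ Finset.Icc 1 n, F l k ≤ (4 * n) * ‖x k‖ := by
    intro k
    have hfilter : Finset.filter (fun l => l ≤ k) (Finset.Icc 1 n) = Finset.Icc 1 (min n k) := by
      ext l; simp only [Finset.mem_filter, Finset.mem_Icc]; omega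
    have h1 : ∑ l ∈ Finset.Icc 1 n, F l k
        = ∑ l ∈ Finset.Icc 1 (min n k), (∏ j ∈ Finset.Ico (k-l) k, wgt j) * ‖x k‖ := by
      rw [hF, Finset.sum_ite, Finset.sum_const_zero, add_zero, hfilter]
    have h2 : ∀ l ∈ Finset.Icc 1 (min n k),
        (∏ j ∈ Finset.Ico (k-l) k, wgt j) = Qp k / Qp (k - l) := by
      intro l hl
      simp only [Finset.mem_Icc] at hl
      have hlk : l ≤ k := le_trans hl.2 (min_le_right _ _)
      rw [eq_div_iff (ne_of_gt (Qp_pos _)), mul_comm]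
      have := Finset.prod_Ico_consecutive wgt (Nat.zero_le (k-l)) (Nat.sub_le k l)
      simpa [Qp, Nat.Ico_zero_eq_range] using this
    rw [h1, Finset.sum_congr rfl (fun l hl => by rw [h2 l hl]), ← Finset.sum_mul]
    apply mul_le_mul_of_nonneg_right (core n k hn) (norm_nonneg _)
  calc ∑ l ∈ Finset.Icc 1 n, ‖(T ^ l) x‖
      = ∑' k, ∑ l ∈ Finset.Icc 1 n, F l k := hsum_eq
    _ ≤ ∑' k, (4 * n) * ‖x k‖ := by
        apply Summable.tsum_le_tsum hbound
          (summable_sum (fun l _ => (hFsum l).summable))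
          (hxsum.summable.mul_left _)
    _ = (4 * n) * ‖x‖ := by rw [tsum_mul_left, hxsum.tsum_eq]
    _ = n * (4 * ‖x‖) := by ring
end

section
/- Let X be a Banach space, N ∈ ℕ, and T₁,…,T_N ∈ L(X). Suppose there exist x ∈ X and strictly increasing sequences (lₖ), (sₖ) of positive integers with Tⱼ^{sₖ}x → 0 and ‖Tⱼ^{lₖ}x‖ → ∞ for each j ∈ {1,…,N}. Then for every σ > 0 and ε > 0, both sets ⋃_{j=1}^N {k ∈ ℕ : ‖Tⱼᵏ x‖ < σ} and ⋃_{j=1}^N {k ∈ ℕ : ‖Tⱼᵏ x‖ ≥ ε} have lower Banach density zero, where the lower Banach density of A ⊆ ℕ is liminf_{s→∞} liminf_{n→∞} |A ∩ [n+1, n+s]| / s. -/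
open Filter

lemma liyorke_aux_pow_norm_le {X : Type*} [NormedAddCommGroup X] [NormedSpace ℝ X]
    (T : X →L[ℝ] X) : ∀ (r : ℕ) (y : X), ‖(T ^ r) y‖ ≤ (max 1 ‖T‖) ^ r * ‖y‖ := by
  intro r
  induction r with
  | zero => intro y; simp
  | succ r ih =>
    intro y
    have h1 : (T ^ (r + 1)) y = (T ^ r) (T y) := by rw [pow_succ]; rfl
    have hM : (0:ℝ) < max 1 ‖T‖ := lt_max_of_lt_left one_pos
    calc ‖(T ^ (r+1)) y‖ = ‖(T ^ r) (T y)‖ := by rw [h1]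
      _ ≤ (max 1 ‖T‖) ^ r * ‖T y‖ := ih (T y)
      _ ≤ (max 1 ‖T‖) ^ r * (‖T‖ * ‖y‖) := by
          have := T.le_opNorm y
          gcongr
      _ ≤ (max 1 ‖T‖) ^ r * ((max 1 ‖T‖) * ‖y‖) := by
          gcongr
          exact le_max_right 1 ‖T‖
      _ = (max 1 ‖T‖) ^ (r+1) * ‖y‖ := by ring

lemma liyorke_liminf_zero {f : ℕ → ℝ}
    (h0 : ∀ n, 0 ≤ f n) (hf : ∃ᶠ n in atTop, f n = 0) :
    Filter.atTop.liminf f = 0 := by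
  rw [Filter.liminf_eq]
  have hset : {a | ∀ᶠ n in atTop, a ≤ f n} = Set.Iic (0:ℝ) := by
    ext a
    simp only [Set.mem_setOf_eq, Set.mem_Iic]
    constructor
    · intro h
      obtain ⟨n, hn1, hn2⟩ := (hf.and_eventually h).exists
      linarith
    · intro h
      exact Filter.Eventually.of_forall fun n => h.trans (h0 n)
  rw [hset, csSup_Iic]

/-- If `Tⱼ^{sₖ}x → 0` and `‖Tⱼ^{lₖ}x‖ → ∞` for every `j`, then for every `σ > 0` and
`ε > 0`, both `⋃ⱼ{k : ‖Tⱼᵏ x‖ < σ}` and `⋃ⱼ{k : ‖Tⱼᵏ x‖ ≥ ε}` have lower Banach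
density zero. -/
theorem lower_banach_density_zero_of_liyorke {X : Type*} [NormedAddCommGroup X]
    [NormedSpace ℝ X] [CompleteSpace X]
    (N : ℕ) (hN : 0 < N) (T : Fin N → (X →L[ℝ] X)) (x : X)
    (l s : ℕ → ℕ) (hl : StrictMono l) (hs : StrictMono s)
    (hl1 : ∀ k, 1 ≤ l k) (hs1 : ∀ k, 1 ≤ s k)
    (hzero : ∀ j, Tendsto (fun k => ((T j) ^ (s k)) x) atTop (nhds 0))
    (hinf : ∀ j, Tendsto (fun k => ‖((T j) ^ (l k)) x‖) atTop atTop) :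
    ∀ σ ε : ℝ, 0 < σ → 0 < ε →
      (Filter.atTop.liminf (fun S : ℕ => Filter.atTop.liminf (fun n : ℕ =>
        (({k | (∃ j : Fin N, ‖((T j) ^ k) x‖ < σ) ∧ n + 1 ≤ k ∧ k ≤ n + S}).ncard : ℝ)
          / S)) = 0) ∧
      (Filter.atTop.liminf (fun S : ℕ => Filter.atTop.liminf (fun n : ℕ =>
        (({k | (∃ j : Fin N, ε ≤ ‖((T j) ^ k) x‖) ∧ n + 1 ≤ k ∧ k ≤ n + S}).ncard : ℝ)
          / S)) = 0) := by
  intro σ ε hσ hε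
  set M : Fin N → ℝ := fun j => max 1 ‖T j‖ with hM
  have hM1 : ∀ j, 1 ≤ M j := fun j => le_max_left _ _
  have hM0 : ∀ j, 0 < M j := fun j => lt_of_lt_of_le one_pos (hM1 j)
  constructor
  · -- first set
    have key : ∀ S : ℕ, Filter.atTop.liminf (fun n : ℕ =>
        (({k | (∃ j : Fin N, ‖((T j) ^ k) x‖ < σ) ∧ n + 1 ≤ k ∧ k ≤ n + S}).ncard : ℝ)
          / S) = 0 := by
      intro S
      apply liyorke_liminf_zero
      · intro n; positivity
      · rw [Filter.frequently_atTop]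
        intro n₀
        have hev1 : ∀ᶠ k in atTop, ∀ j, σ * (M j)^S ≤ ‖((T j) ^ (l k)) x‖ :=
          eventually_all.2 fun j => (hinf j).eventually_ge_atTop _
        have hev2 : ∀ᶠ k in atTop, n₀ + S ≤ l k :=
          (hl.tendsto_atTop).eventually_ge_atTop _
        obtain ⟨k, hk1, hk2⟩ := (hev1.and hev2).exists
        refine ⟨l k - S, by omega, ?_⟩
        have hempty : {k' | (∃ j : Fin N, ‖((T j) ^ k') x‖ < σ) ∧
            (l k - S) + 1 ≤ k' ∧ k' ≤ (l k - S) + S} = ∅ := by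
          rw [Set.eq_empty_iff_forall_notMem]
          rintro k' ⟨⟨j, hlt⟩, h1, h2⟩
          set r := l k - k' with hr
          have hrk : r + k' = l k := by omega
          have hrS : r ≤ S := by omega
          have hb : ‖((T j) ^ (l k)) x‖ ≤ (M j)^r * ‖((T j) ^ k') x‖ := by
            have : ((T j) ^ (l k)) x = ((T j) ^ r) (((T j) ^ k') x) := by
              rw [← hrk, pow_add]; rfl
            rw [this]
            exact liyorke_aux_pow_norm_le (T j) r _
          have hMr : (M j)^r ≤ (M j)^S := pow_le_pow_right₀ (hM1 j) hrS
          have h3 : σ * (M j)^S ≤ ‖((T j) ^ (l k)) x‖ := hk1 j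
          have hMpos : (0:ℝ) < (M j)^r := pow_pos (hM0 j) r
          nlinarith [pow_pos (hM0 j) S]
        rw [hempty, Set.ncard_empty]
        simp
    have : (fun S : ℕ => Filter.atTop.liminf (fun n : ℕ =>
        (({k | (∃ j : Fin N, ‖((T j) ^ k) x‖ < σ) ∧ n + 1 ≤ k ∧ k ≤ n + S}).ncard : ℝ)
          / S)) = fun _ => (0:ℝ) := funext key
    rw [this, liminf_const]
  · -- second set
    have key : ∀ S : ℕ, Filter.atTop.liminf (fun n : ℕ =>
        (({k | (∃ j : Fin N, ε ≤ ‖((T j) ^ k) x‖) ∧ n + 1 ≤ k ∧ k ≤ n + S}).ncard : ℝ)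
          / S) = 0 := by
      intro S
      apply liyorke_liminf_zero
      · intro n; positivity
      · rw [Filter.frequently_atTop]
        intro n₀
        have hev1 : ∀ᶠ k in atTop, ∀ j, ‖((T j) ^ (s k)) x‖ < ε / (M j)^S := by
          refine eventually_all.2 fun j => ?_
          have hn : Tendsto (fun k => ‖((T j) ^ (s k)) x‖) atTop (nhds 0) := by
            simpa using (hzero j).norm
          exact hn.eventually (gt_mem_nhds (by positivity))
        have hev2 : ∀ᶠ k in atTop, n₀ ≤ s k :=
          (hs.tendsto_atTop).eventually_ge_atTop _
        obtain ⟨k, hk1, hk2⟩ := (hev1.and hev2).exists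
        refine ⟨s k, hk2, ?_⟩
        have hempty : {k' | (∃ j : Fin N, ε ≤ ‖((T j) ^ k') x‖) ∧
            s k + 1 ≤ k' ∧ k' ≤ s k + S} = ∅ := by
          rw [Set.eq_empty_iff_forall_notMem]
          rintro k' ⟨⟨j, hge⟩, h1, h2⟩
          set r := k' - s k with hr
          have hrk : r + s k = k' := by omega
          have hrS : r ≤ S := by omega
          have hb : ‖((T j) ^ k') x‖ ≤ (M j)^r * ‖((T j) ^ (s k)) x‖ := by
            have : ((T j) ^ k') x = ((T j) ^ r) (((T j) ^ (s k)) x) := by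
              rw [← hrk, pow_add]; rfl
            rw [this]
            exact liyorke_aux_pow_norm_le (T j) r _
          have hMr : (M j)^r ≤ (M j)^S := pow_le_pow_right₀ (hM1 j) hrS
          have h3 : ‖((T j) ^ (s k)) x‖ < ε / (M j)^S := hk1 j
          have hMpos : (0:ℝ) < (M j)^S := pow_pos (hM0 j) S
          have h4 : (M j)^r * ‖((T j) ^ (s k)) x‖ < ε := by
            have h5 : (M j)^r * ‖((T j) ^ (s k)) x‖ ≤ (M j)^S * ‖((T j) ^ (s k)) x‖ := by
              gcongr
            calc (M j)^r * ‖((T j) ^ (s k)) x‖ ≤ (M j)^S * ‖((T j) ^ (s k)) x‖ := h5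
              _ < (M j)^S * (ε / (M j)^S) := by gcongr
              _ = ε := by field_simp
          linarith
        rw [hempty, Set.ncard_empty]
        simp
    have : (fun S : ℕ => Filter.atTop.liminf (fun n : ℕ =>
        (({k | (∃ j : Fin N, ε ≤ ‖((T j) ^ k) x‖) ∧ n + 1 ≤ k ∧ k ≤ n + S}).ncard : ℝ)
          / S)) = fun _ => (0:ℝ) := funext key
    rw [this, liminf_const]
end
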